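/- With notation as in the recursive construction of Φ_Γ : G_Γ → G'_Γ induced by set maps f_i : G_i → G'_i, the restriction of Φ_Γ to the kernel K_Γ = ker(G_Γ → ∏ G_i) is a group homomorphism into K'_Γ = ker(G'_Γ → ∏ G'_i). -/

import Mathlib

open Monoid
open scoped commutatorElement

namespace GPaper

variable {ι : Type*}

/-- The relator subgroup of the graph product: normal closure of commutators of
elements of vertex groups at adjacent vertices. -/
def Rels (Γ : SimpleGraph ι) (G : ι → Type*) [∀ i, Group (G i)] : Subgroup (Monoid.CoprodI G) :=
  Subgroup.normalClosure
    { x | ∃ (i j : ι) (g : G i) (h : G j), Γ.Adj i j ∧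
          x = ⁅Monoid.CoprodI.of g, Monoid.CoprodI.of h⁆ }

instance (Γ : SimpleGraph ι) (G : ι → Type*) [∀ i, Group (G i)] : (Rels Γ G).Normal :=
  Subgroup.normalClosure_normal

/-- The graph product of the groups `G i` over the simplicial graph `Γ`. -/
abbrev GP (Γ : SimpleGraph ι) (G : ι → Type*) [∀ i, Group (G i)] :=
  Monoid.CoprodI G ⧸ Rels Γ G

/-- The canonical inclusion of a vertex group into the graph product. -/
def of (Γ : SimpleGraph ι) (G : ι → Type*) [∀ i, Group (G i)] (i : ι) : G i →* GP Γ G :=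
  (QuotientGroup.mk' (Rels Γ G)).comp Monoid.CoprodI.of

/-- The canonical homomorphism from the graph product to the direct product. -/
def proj [DecidableEq ι] (Γ : SimpleGraph ι) (G : ι → Type*) [∀ i, Group (G i)] :
    GP Γ G →* (∀ i, G i) :=
  QuotientGroup.lift (Rels Γ G) (Monoid.CoprodI.lift (fun i => MonoidHom.mulSingle G i)) (by
    intro x hx
    refine Subgroup.normalClosure_le_normal ?_ hx
    rintro y ⟨i, j, g, h, hadj, rfl⟩
    have hij : i ≠ j := hadj.ne
    simp only [SetLike.mem_coe, MonoidHom.mem_ker, map_commutatorElement,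
      Monoid.CoprodI.lift_of]
    rw [commutatorElement_eq_one_iff_commute]
    exact Pi.mulSingle_commute hij g h)

/-- The canonical epimorphism `G_Γ → G_Γ'` when `Γ'` is obtained from `Γ` by adding edges. -/
def mapGraph (Γ Γ' : SimpleGraph ι) (hΓ : Γ ≤ Γ') (G : ι → Type*) [∀ i, Group (G i)] :
    GP Γ G →* GP Γ' G :=
  QuotientGroup.lift (Rels Γ G) (QuotientGroup.mk' (Rels Γ' G)) (by
    intro x hx
    rw [QuotientGroup.ker_mk']
    refine Subgroup.normalClosure_le_normal ?_ hx
    rintro y ⟨i, j, g, h, hadj, rfl⟩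
    exact Subgroup.subset_normalClosure ⟨i, j, g, h, hΓ hadj, rfl⟩)

/-- The element of the graph product represented by a word (list of syllables). -/
def wordProd (Γ : SimpleGraph ι) (G : ι → Type*) [∀ i, Group (G i)]
    (w : List (Σ i, G i)) : GP Γ G :=
  (w.map fun s => of Γ G s.1 s.2).prod

/-- The image of a word in the direct product of the vertex groups. -/
def piProd [DecidableEq ι] (G : ι → Type*) [∀ i, Group (G i)]
    (w : List (Σ i, G i)) : ∀ i, G i :=
  (w.map fun s => Pi.mulSingle s.1 s.2).prod

/-- The ordered product of those syllables of a word that belong to `G i`. -/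
def sylProd [DecidableEq ι] (G : ι → Type*) [∀ i, Group (G i)]
    (w : List (Σ i, G i)) (i : ι) : G i :=
  (w.filterMap fun s => if h : s.1 = i then some (cast (congrArg G h) s.2) else none).prod

/-- The normal (syllable) length of an element of a graph product:
the minimal number of syllables in a word representing it. -/
noncomputable def nl (Γ : SimpleGraph ι) (G : ι → Type*) [∀ i, Group (G i)]
    (g : GP Γ G) : ℕ :=
  sInf { n | ∃ w : List (Σ i, G i), wordProd Γ G w = g ∧ w.length = n }

section Phi

open scoped Classical

variable [DecidableEq ι] {G G' : ι → Type*} [∀ i, Group (G i)] [∀ i, Group (G' i)]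

/-- One step of the recursive construction of `Φ`: the new syllable
`f(π(w))⁻¹ · f(π(w)s)` (dropped if trivial), where `g = π(w)`. -/
noncomputable def phiStep (f : ∀ i, G i → G' i) (g : ∀ i, G i) (s : Σ i, G i) : List (Σ i, G' i) :=
  if (f s.1 (g s.1))⁻¹ * f s.1 (g s.1 * s.2) = 1 then []
  else [⟨s.1, (f s.1 (g s.1))⁻¹ * f s.1 (g s.1 * s.2)⟩]

/-- Auxiliary recursion: process the word left to right, carrying the
image `g` of the prefix in the direct product. -/
noncomputable def phiAux (f : ∀ i, G i → G' i) : (∀ i, G i) → List (Σ i, G i) → List (Σ i, G' i)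
  | _, [] => []
  | g, s :: w => phiStep f g s ++ phiAux f (g * Pi.mulSingle s.1 s.2) w

/-- The word map `Φ : S* → S'*` induced by the set maps `f i : G i → G' i`. -/
noncomputable def phiWord (f : ∀ i, G i → G' i) (w : List (Σ i, G i)) : List (Σ i, G' i) :=
  phiAux f 1 w

end Phi

section Aux

variable {ι : Type*} [DecidableEq ι] (Γ : SimpleGraph ι)
  (G G' : ι → Type*) [∀ i, Group (G i)] [∀ i, Group (G' i)]

lemma of_commute {i j : ι} (h : Γ.Adj i j) (a : G i) (b : G j) :
    Commute (of Γ G i a) (of Γ G j b) := by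
  have h1 : (QuotientGroup.mk' (Rels Γ G)) ⁅Monoid.CoprodI.of a, Monoid.CoprodI.of b⁆ = 1 :=
    (QuotientGroup.eq_one_iff _).2
      (Subgroup.subset_normalClosure ⟨i, j, a, b, h, rfl⟩)
  rw [map_commutatorElement] at h1
  exact commutatorElement_eq_one_iff_commute.mp h1

lemma wordProd_nil : wordProd Γ G ([] : List (Σ i, G i)) = 1 := rfl

lemma wordProd_cons (s : Σ i, G i) (w : List (Σ i, G i)) :
    wordProd Γ G (s :: w) = of Γ G s.1 s.2 * wordProd Γ G w := by
  simp [wordProd]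

lemma wordProd_append (u v : List (Σ i, G i)) :
    wordProd Γ G (u ++ v) = wordProd Γ G u * wordProd Γ G v := by
  simp [wordProd]

lemma piProd_nil : piProd G ([] : List (Σ i, G i)) = 1 := rfl

lemma piProd_cons (s : Σ i, G i) (w : List (Σ i, G i)) :
    piProd G (s :: w) = Pi.mulSingle s.1 s.2 * piProd G w := by
  simp [piProd]

lemma proj_of (i : ι) (x : G i) :
    proj Γ G (of Γ G i x) = Pi.mulSingle i x := by
  simp [proj, of, MonoidHom.mulSingle]; rfl

lemma proj_wordProd (w : List (Σ i, G i)) :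
    proj Γ G (wordProd Γ G w) = piProd G w := by
  induction w with
  | nil => simp [wordProd_nil, piProd_nil]
  | cons s w ih => rw [wordProd_cons, map_mul, ih, proj_of, piProd_cons]

/-- Right translation action of the direct product on functions into `GP Γ G'`. -/
def trAut : (∀ i, G i) →* MulAut ((∀ i, G i) → GP Γ G') where
  toFun h :=
    { toFun := fun ψ g => ψ (g * h)
      invFun := fun ψ g => ψ (g * h⁻¹)
      left_inv := fun ψ => funext fun g => by simp
      right_inv := fun ψ => funext fun g => by simp
      map_mul' := fun ψ₁ ψ₂ => rfl }
  map_one' := by ext ψ g; simp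
  map_mul' h₁ h₂ := by ext ψ g; simp [mul_assoc]

/-- The auxiliary wreath-type group. -/
abbrev TT := ((∀ i, G i) → GP Γ G') ⋊[trAut Γ G G'] (∀ i, G i)

/-- The lift of the set map `f i` into the auxiliary group. -/
def theta (f : ∀ i, G i → G' i) (i : ι) : G i →* TT Γ G G' where
  toFun x := ⟨fun g => of Γ G' i ((f i (g i))⁻¹ * f i (g i * x)), Pi.mulSingle i x⟩
  map_one' := by
    refine SemidirectProduct.ext ?_ ?_
    · funext g; simp
    · simp
  map_mul' x y := by
    refine SemidirectProduct.ext ?_ ?_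
    · funext g
      show of Γ G' i ((f i (g i))⁻¹ * f i (g i * (x * y))) =
        of Γ G' i ((f i (g i))⁻¹ * f i (g i * x)) *
          of Γ G' i ((f i ((g * Pi.mulSingle i x) i))⁻¹ *
            f i ((g * Pi.mulSingle i x) i * y))
      rw [← map_mul]
      congr 1
      simp only [Pi.mul_apply, Pi.mulSingle_eq_same, ← mul_assoc]
      group
    · show Pi.mulSingle i (x * y) = Pi.mulSingle i x * Pi.mulSingle i y
      exact Pi.mulSingle_mul i x y

lemma theta_commute (f : ∀ i, G i → G' i) {i j : ι} (h : Γ.Adj i j)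
    (x : G i) (y : G j) : Commute (theta Γ G G' f i x) (theta Γ G G' f j y) := by
  have hij : i ≠ j := h.ne
  refine SemidirectProduct.ext ?_ ?_
  · funext g
    show of Γ G' i ((f i (g i))⁻¹ * f i (g i * x)) *
        of Γ G' j ((f j ((g * Pi.mulSingle i x) j))⁻¹ *
          f j ((g * Pi.mulSingle i x) j * y)) =
      of Γ G' j ((f j (g j))⁻¹ * f j (g j * y)) *
        of Γ G' i ((f i ((g * Pi.mulSingle j y) i))⁻¹ *
          f i ((g * Pi.mulSingle j y) i * x))
    rw [show (g * Pi.mulSingle i x) j = g j by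
        simp [Pi.mulSingle_eq_of_ne hij.symm],
      show (g * Pi.mulSingle j y) i = g i by
        simp [Pi.mulSingle_eq_of_ne hij]]
    exact of_commute Γ G' h _ _
  · show Pi.mulSingle i x * Pi.mulSingle j y = Pi.mulSingle j y * Pi.mulSingle i x
    exact Pi.mulSingle_commute hij x y

/-- The resulting homomorphism from the graph product to the auxiliary group. -/
def Theta (f : ∀ i, G i → G' i) : GP Γ G →* TT Γ G G' :=
  QuotientGroup.lift (Rels Γ G) (Monoid.CoprodI.lift (theta Γ G G' f)) (by
    intro x hx
    refine Subgroup.normalClosure_le_normal ?_ hx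
    rintro y ⟨i, j, g, h, hadj, rfl⟩
    simp only [SetLike.mem_coe, MonoidHom.mem_ker, map_commutatorElement,
      Monoid.CoprodI.lift_of]
    rw [commutatorElement_eq_one_iff_commute]
    exact theta_commute Γ G G' f hadj g h)

lemma Theta_of (f : ∀ i, G i → G' i) (i : ι) (x : G i) :
    Theta Γ G G' f (of Γ G i x) = theta Γ G G' f i x := by
  simp [Theta, of]

lemma wordProd_phiStep (f : ∀ i, G i → G' i) (g : ∀ i, G i) (s : Σ i, G i) :
    wordProd Γ G' (phiStep f g s) =
      of Γ G' s.1 ((f s.1 (g s.1))⁻¹ * f s.1 (g s.1 * s.2)) := by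
  unfold phiStep
  split
  · next h => rw [h]; simp [wordProd_nil]
  · simp [wordProd]

lemma Theta_wordProd (f : ∀ i, G i → G' i) (w : List (Σ i, G i)) :
    Theta Γ G G' f (wordProd Γ G w) =
      ⟨fun g => wordProd Γ G' (phiAux f g w), piProd G w⟩ := by
  induction w with
  | nil =>
    rw [wordProd_nil, map_one]
    refine (SemidirectProduct.ext ?_ ?_).symm
    · funext g; simp [phiAux, wordProd_nil]
    · simp [piProd_nil]
  | cons s w ih =>
    rw [wordProd_cons, map_mul, ih, Theta_of, piProd_cons]
    refine SemidirectProduct.ext ?_ ?_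
    · funext g
      show of Γ G' s.1 ((f s.1 (g s.1))⁻¹ * f s.1 (g s.1 * s.2)) *
          wordProd Γ G' (phiAux f (g * Pi.mulSingle s.1 s.2) w) =
        wordProd Γ G' (phiAux f g (s :: w))
      rw [show phiAux f g (s :: w) = phiStep f g s ++ phiAux f (g * Pi.mulSingle s.1 s.2) w
          from rfl,
        wordProd_append, wordProd_phiStep]
    · rfl

lemma proj_phiAux (f : ∀ i, G i → G' i) (w : List (Σ i, G i)) :
    ∀ g : ∀ i, G i, proj Γ G' (wordProd Γ G' (phiAux f g w)) =
      fun i => (f i (g i))⁻¹ * f i (g i * piProd G w i) := by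
  induction w with
  | nil =>
    intro g
    funext i
    simp [phiAux, wordProd_nil, piProd_nil]
  | cons s w ih =>
    intro g
    rw [show phiAux f g (s :: w) = phiStep f g s ++ phiAux f (g * Pi.mulSingle s.1 s.2) w
        from rfl,
      wordProd_append, map_mul, wordProd_phiStep, proj_of, ih]
    funext i
    rcases s with ⟨j, x⟩
    by_cases hji : j = i
    · subst hji
      simp only [Pi.mul_apply, Pi.mulSingle_eq_same, piProd_cons]
      rw [← mul_assoc, ← mul_assoc]
      group
    · simp only [Pi.mul_apply, Pi.mulSingle_eq_of_ne' hji, piProd_cons, mul_one, one_mul]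

lemma exists_word (x : GP Γ G) : ∃ w : List (Σ i, G i), wordProd Γ G w = x := by
  induction x using QuotientGroup.induction_on with
  | _ y =>
    induction y using Monoid.CoprodI.induction_on with
    | one => exact ⟨[], rfl⟩
    | of i m => exact ⟨[⟨i, m⟩], by simp [wordProd_cons, wordProd_nil]; rfl⟩
    | mul a b ha hb =>
      obtain ⟨u, hu⟩ := ha
      obtain ⟨v, hv⟩ := hb
      exact ⟨u ++ v, by rw [wordProd_append, hu, hv]; rfl⟩

end Aux

/-- The word map `Φ` induces a group homomorphism from the kernel
`K_Γ = ker(G_Γ → ∏ G i)` into `K'_Γ = ker(G'_Γ → ∏ G' i)`, given on (the class of) a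
word `w ∈ K_Γ` by the word `phiWord f w`. -/
theorem stmt3 {ι : Type*} [DecidableEq ι] [Fintype ι] (Γ : SimpleGraph ι)
    (G G' : ι → Type*) [∀ i, Group (G i)] [∀ i, Group (G' i)]
    (f : ∀ i, G i → G' i) :
    ∃ Φ : (proj Γ G).ker →* (proj Γ G').ker,
      ∀ (w : List (Σ i, G i)) (hw : wordProd Γ G w ∈ (proj Γ G).ker),
        (Φ ⟨wordProd Γ G w, hw⟩ : GP Γ G') = wordProd Γ G' (phiWord f w) := by
  classical
  -- the value of `Theta` at an element of the kernel, evaluated at 1,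
  -- lies in the kernel of `proj Γ G'`
  have hmem : ∀ k : (proj Γ G).ker, (Theta Γ G G' f (k : GP Γ G)).left 1 ∈ (proj Γ G').ker := by
    rintro ⟨x, hx⟩
    obtain ⟨w, rfl⟩ := exists_word Γ G x
    have hpi : piProd G w = 1 := by
      rw [← proj_wordProd Γ G w]; exact hx
    rw [Theta_wordProd]
    show proj Γ G' (wordProd Γ G' (phiAux f 1 w)) = 1
    rw [proj_phiAux Γ G G' f w 1, hpi]
    funext i
    simp
  -- the right component of `Theta` is `proj`
  have hright : ∀ x : GP Γ G, (Theta Γ G G' f x).right = proj Γ G x := by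
    intro x
    obtain ⟨w, rfl⟩ := exists_word Γ G x
    rw [Theta_wordProd, proj_wordProd]
  refine ⟨{ toFun := fun k => ⟨(Theta Γ G G' f (k : GP Γ G)).left 1, hmem k⟩
            map_one' := ?_
            map_mul' := ?_ }, ?_⟩
  · ext
    show (Theta Γ G G' f ((1 : (proj Γ G).ker) : GP Γ G)).left 1 = 1
    rw [show ((1 : (proj Γ G).ker) : GP Γ G) = 1 from rfl, map_one]
    rfl
  · rintro ⟨a, ha⟩ ⟨b, hb⟩
    ext
    show (Theta Γ G G' f (a * b)).left 1 =
      (Theta Γ G G' f a).left 1 * (Theta Γ G G' f b).left 1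
    rw [map_mul, SemidirectProduct.mul_left]
    show (Theta Γ G G' f a).left 1 *
        (Theta Γ G G' f b).left (1 * (Theta Γ G G' f a).right) = _
    rw [hright a, ha, mul_one]
  · intro w hw
    show (Theta Γ G G' f (wordProd Γ G w)).left 1 = wordProd Γ G' (phiWord f w)
    rw [Theta_wordProd]
    rfl

end GPaper
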